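/- For p = 0, 1, …, n−1, the polynomials g_p(x_1, …, x_n) = (x_1 − p + n − 1)(x_2 − p + n − 2)⋯(x_n − p) ∈ ℂ[x_1, …, x_n] are shifted symmetric, are algebraically independent over ℂ, and generate the algebra Λ*(n) of shifted symmetric polynomials: Λ*(n) = ℂ[g_0, g_1, …, g_{n−1}]. -/

import Mathlib

noncomputable section

open MvPolynomial

/-- A polynomial `f ∈ ℂ[x_1, …, x_n]` is *shifted symmetric* if
`f(x_1, …, x_i, x_{i+1}, …, x_n) = f(x_1, …, x_{i+1} − 1, x_i + 1, …, x_n)` for every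
`i = 1, …, n−1`. -/
def ShiftedSymmetric {n : ℕ} (f : MvPolynomial (Fin n) ℂ) : Prop :=
  ∀ i j : Fin n, (i : ℕ) + 1 = (j : ℕ) →
    MvPolynomial.aeval (fun k : Fin n =>
      if k = i then MvPolynomial.X j - 1
      else if k = j then MvPolynomial.X i + 1
      else MvPolynomial.X k) f = f

/-- `g_p(x_1, …, x_n) = (x_1 − p + n − 1)(x_2 − p + n − 2)⋯(x_n − p)`. -/
def gPoly (n : ℕ) (p : ℕ) : MvPolynomial (Fin n) ℂ :=
  ∏ i : Fin n, (MvPolynomial.X i + MvPolynomial.C ((n : ℂ) - 1 - (i : ℕ) - (p : ℕ)))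

namespace ShiftP

open Finset Equiv

variable (n : ℕ)

/-- The shift constants `c_i = n - 1 - i`. -/
def cc (i : Fin n) : ℂ := (n : ℂ) - 1 - (i : ℕ)

/-- Substitution `x_i ↦ x_i - c_i` (so `Sm f` is `f` written in the variables `y_i = x_i + c_i`). -/
def Sm : MvPolynomial (Fin n) ℂ →ₐ[ℂ] MvPolynomial (Fin n) ℂ :=
  aeval (fun i => X i - C (cc n i))

/-- Substitution `x_i ↦ x_i + c_i`, the inverse of `Sm`. -/
def Tm : MvPolynomial (Fin n) ℂ →ₐ[ℂ] MvPolynomial (Fin n) ℂ :=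
  aeval (fun i => X i + C (cc n i))

lemma Sm_Tm (f : MvPolynomial (Fin n) ℂ) : Sm n (Tm n f) = f := by
  rw [← AlgHom.comp_apply]
  have : (Sm n).comp (Tm n) = AlgHom.id ℂ _ := by
    apply algHom_ext; intro i; simp [Sm, Tm]
  rw [this, AlgHom.id_apply]

lemma Tm_Sm (f : MvPolynomial (Fin n) ℂ) : Tm n (Sm n f) = f := by
  rw [← AlgHom.comp_apply]
  have : (Tm n).comp (Sm n) = AlgHom.id ℂ _ := by
    apply algHom_ext; intro i; simp [Sm, Tm]
  rw [this, AlgHom.id_apply]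

lemma Sm_shift (f : MvPolynomial (Fin n) ℂ) {i j : Fin n} (hij : (i : ℕ) + 1 = (j : ℕ)) :
    Sm n (aeval (fun k : Fin n =>
      if k = i then X j - 1 else if k = j then X i + 1 else X k) f)
      = rename (Equiv.swap i j) (Sm n f) := by
  have hine : i ≠ j := by
    intro h; rw [h] at hij; omega
  have hcj : cc n j + 1 = cc n i := by
    simp only [cc]; rw [← hij]; push_cast; ring
  rw [← AlgHom.comp_apply, ← AlgHom.comp_apply]
  congr 1
  apply algHom_ext
  intro k
  simp only [AlgHom.comp_apply, aeval_X, Sm]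
  by_cases hki : k = i
  · subst hki
    rw [if_pos rfl]
    rw [map_sub, map_sub, aeval_X, map_one, rename_X, rename_C, Equiv.swap_apply_left]
    rw [← hcj, C_add, C_1]; ring
  · by_cases hkj : k = j
    · subst hkj
      rw [if_neg hki, if_pos rfl]
      rw [map_add, map_sub, aeval_X, map_one, rename_X, rename_C, Equiv.swap_apply_right,
        ← hcj, C_add, C_1]
      ring
    · rw [if_neg hki, if_neg hkj, aeval_X, map_sub, rename_X, rename_C,
        Equiv.swap_apply_of_ne_of_ne hki hkj]

/-- Under the change of variables `Sm`, shifted symmetric polynomials correspond exactly to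
symmetric polynomials. -/
lemma shiftedSymmetric_iff (f : MvPolynomial (Fin n) ℂ) :
    ShiftedSymmetric f ↔ (Sm n f).IsSymmetric := by
  constructor
  · intro hf
    have key : ∀ i j : Fin n, (i : ℕ) + 1 = (j : ℕ) →
        rename (Equiv.swap i j) (Sm n f) = Sm n f := by
      intro i j hij
      rw [← Sm_shift n f hij, hf i j hij]
    intro σ
    match n with
    | 0 =>
      have : ⇑σ = id := by funext i; exact i.elim0
      rw [this, rename_id, AlgHom.id_apply]
    | m + 1 =>
      have hσ : σ ∈ Submonoid.closure
          (Set.range fun i : Fin m => Equiv.swap i.castSucc i.succ) := by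
        rw [Equiv.Perm.mclosure_swap_castSucc_succ]; trivial
      induction hσ using Submonoid.closure_induction with
      | mem a ha =>
        obtain ⟨i, rfl⟩ := ha
        exact key i.castSucc i.succ (by simp)
      | one => simp only [Equiv.Perm.coe_one, rename_id, AlgHom.id_apply]
      | mul a b _ _ iha ihb =>
        have : ⇑(a * b) = ⇑a ∘ ⇑b := rfl
        rw [this, ← rename_rename, ihb, iha]
  · intro hs i j hij
    have h := Sm_shift n f hij
    rw [hs (Equiv.swap i j)] at h
    have h2 := congrArg (Tm n) h
    rwa [Tm_Sm, Tm_Sm] at h2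

/-- `hP n p = ∏ i, (x_i - p)`, the image of `g_p` under `Sm`. -/
def hP (p : ℕ) : MvPolynomial (Fin n) ℂ := ∏ i : Fin n, (X i - C (p : ℂ))

lemma Tm_hP (p : ℕ) : Tm n (hP n p) = gPoly n p := by
  rw [hP, map_prod, gPoly]
  refine Finset.prod_congr rfl fun i _ => ?_
  rw [map_sub, Tm, aeval_X, aeval_C, algebraMap_eq, cc, add_sub_assoc, ← C_sub]

lemma Sm_gP (p : ℕ) : Sm n (gPoly n p) = hP n p := by
  rw [← Tm_hP, Sm_Tm]

lemma hP_isSymmetric (p : ℕ) : (hP n p).IsSymmetric := by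
  intro σ
  rw [hP, map_prod]
  simp_rw [map_sub, rename_X, rename_C]
  exact Equiv.prod_comp σ (fun i => X i - C (p : ℂ))

/-- The Vandermonde-type coefficient matrix expressing `hP n p` in terms of the elementary
symmetric polynomials. -/
def Amat : Matrix (Fin n) (Fin n) ℂ := fun p i => (-(p : ℂ)) ^ (n - 1 - (i : ℕ))

/-- The elementary symmetric polynomials `e_1, …, e_n`. -/
def Epoly (i : Fin n) : MvPolynomial (Fin n) ℂ := esymm (Fin n) ℂ ((i : ℕ) + 1)

/-- The constant terms `(-p)^n`. -/
def bb (p : Fin n) : ℂ := (-(p : ℂ)) ^ n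

lemma hP_eq (p : Fin n) :
    hP n (p : ℕ) = ∑ i : Fin n, C (Amat n p i) * Epoly n i + C (bb n p) := by
  have h := MvPolynomial.prod_C_add_X_eq_sum_esymm ℂ (Fin n)
  have h2 := congrArg (Polynomial.eval (-(C ((p : ℕ) : ℂ)) : MvPolynomial (Fin n) ℂ)) h
  rw [Polynomial.eval_prod] at h2
  simp only [Polynomial.eval_add, Polynomial.eval_X, Polynomial.eval_C,
    Polynomial.eval_finset_sum, Polynomial.eval_mul, Polynomial.eval_pow,
    Fintype.card_fin] at h2
  have hl : hP n (p : ℕ) = ∏ i : Fin n, (-C ((p : ℕ) : ℂ) + X i) := by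
    rw [hP]; exact Finset.prod_congr rfl fun i _ => by ring
  rw [hl, h2]
  have hpow : ∀ m : ℕ, (-C ((p : ℕ) : ℂ) : MvPolynomial (Fin n) ℂ) ^ m
      = C ((-(p : ℂ)) ^ m) := by
    intro m; rw [← C_neg, ← C_pow]
  simp_rw [hpow]
  rw [Finset.sum_range_succ']
  simp only [esymm_zero, one_mul, Nat.sub_zero]
  congr 1
  rw [← Fin.sum_univ_eq_sum_range (fun j => esymm (Fin n) ℂ (j + 1) * C ((-(p:ℂ)) ^ (n - (j + 1))))]
  refine Finset.sum_congr rfl fun i _ => ?_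
  rw [Epoly, Amat, mul_comm, Nat.sub_sub, Nat.add_comm 1 (i : ℕ)]

lemma Amat_det_isUnit : IsUnit (Amat n).det := by
  have hA : Amat n = (Matrix.vandermonde (fun p : Fin n => -(p : ℂ))).submatrix id
      ⇑(Fin.revPerm (n := n)) := by
    ext p i
    simp [Amat, Matrix.vandermonde, Fin.val_rev]
    congr 1
    omega
  rw [isUnit_iff_ne_zero, hA, Matrix.det_permute', Matrix.det_vandermonde]
  apply mul_ne_zero
  · exact Int.cast_ne_zero.2 (Units.ne_zero _)
  · rw [Finset.prod_ne_zero_iff]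
    intro i _
    rw [Finset.prod_ne_zero_iff]
    intro j hj
    rw [Finset.mem_Ioi] at hj
    intro h
    have h2 : ((j : ℕ) : ℂ) = ((i : ℕ) : ℂ) := by linear_combination -h
    have h3 : (j : ℕ) = (i : ℕ) := Nat.cast_injective h2
    rw [Fin.lt_def] at hj
    omega

lemma sum_C_mul (M N : Matrix (Fin n) (Fin n) ℂ) (i : Fin n)
    (y : Fin n → MvPolynomial (Fin n) ℂ) :
    ∑ p, C (M i p) * ∑ k, C (N p k) * y k = ∑ k, C ((M * N) i k) * y k := by
  simp_rw [Finset.mul_sum, ← mul_assoc, ← C_mul]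
  rw [Finset.sum_comm]
  refine Finset.sum_congr rfl fun k _ => ?_
  rw [← Finset.sum_mul, ← map_sum, Matrix.mul_apply]

lemma sum_C_one (i : Fin n) (y : Fin n → MvPolynomial (Fin n) ℂ) :
    ∑ k, C ((1 : Matrix (Fin n) (Fin n) ℂ) i k) * y k = y i := by
  simp only [Matrix.one_apply, apply_ite C, C_1, C_0, ite_mul, one_mul, zero_mul]
  rw [Finset.sum_ite_eq Finset.univ i y]
  simp

/-- The affine substitution `x_p ↦ ∑ i, A p i x_i + b p`. -/
def Phi : MvPolynomial (Fin n) ℂ →ₐ[ℂ] MvPolynomial (Fin n) ℂ :=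
  aeval (fun p : Fin n => ∑ i, C (Amat n p i) * X i + C (bb n p))

/-- The inverse affine substitution. -/
def Psi : MvPolynomial (Fin n) ℂ →ₐ[ℂ] MvPolynomial (Fin n) ℂ :=
  aeval (fun i : Fin n => ∑ p, C ((Amat n)⁻¹ i p) * (X p - C (bb n p)))

lemma Phi_Psi (f : MvPolynomial (Fin n) ℂ) : Phi n (Psi n f) = f := by
  rw [← AlgHom.comp_apply]
  have : (Phi n).comp (Psi n) = AlgHom.id ℂ _ := by
    apply algHom_ext
    intro i
    rw [AlgHom.comp_apply, AlgHom.id_apply, Psi, aeval_X, map_sum]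
    have step : ∀ p : Fin n, (Phi n) (C ((Amat n)⁻¹ i p) * (X p - C (bb n p)))
        = C ((Amat n)⁻¹ i p) * ∑ k, C (Amat n p k) * X k := by
      intro p
      simp only [Phi, map_mul, map_sub, aeval_X, aeval_C, algebraMap_eq]
      rw [add_sub_cancel_right]
    simp_rw [step]
    rw [sum_C_mul, Matrix.nonsing_inv_mul _ (Amat_det_isUnit n), sum_C_one]
  rw [this, AlgHom.id_apply]

lemma Psi_Phi (f : MvPolynomial (Fin n) ℂ) : Psi n (Phi n f) = f := by
  rw [← AlgHom.comp_apply]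
  have : (Psi n).comp (Phi n) = AlgHom.id ℂ _ := by
    apply algHom_ext
    intro p
    rw [AlgHom.comp_apply, AlgHom.id_apply, Phi, aeval_X, map_add, map_sum]
    have step : ∀ i : Fin n, (Psi n) (C (Amat n p i) * X i)
        = C (Amat n p i) * ∑ q, C ((Amat n)⁻¹ i q) * (X q - C (bb n q)) := by
      intro i
      rw [map_mul, Psi, aeval_C, algebraMap_eq, aeval_X]
    simp_rw [step]
    rw [sum_C_mul, Matrix.mul_nonsing_inv _ (Amat_det_isUnit n),
      sum_C_one n p (fun q => X q - C (bb n q)), Psi, aeval_C, algebraMap_eq]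
    ring
  rw [this, AlgHom.id_apply]

lemma aevalE_eq : (aeval (Epoly n) : MvPolynomial (Fin n) ℂ →ₐ[ℂ] MvPolynomial (Fin n) ℂ)
    = ((symmetricSubalgebra (Fin n) ℂ).val).comp (esymmAlgHom (Fin n) ℂ n) := by
  apply algHom_ext
  intro i
  rw [aeval_X, AlgHom.comp_apply, Subalgebra.coe_val, esymmAlgHom_apply, aeval_X, Epoly]

lemma range_aevalE (x : MvPolynomial (Fin n) ℂ) :
    (∃ q, (aeval (Epoly n) : MvPolynomial (Fin n) ℂ →ₐ[ℂ] MvPolynomial (Fin n) ℂ) q = x)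
      ↔ x.IsSymmetric := by
  constructor
  · rintro ⟨q, rfl⟩
    rw [aevalE_eq]
    exact (mem_symmetricSubalgebra _).1 ((esymmAlgHom (Fin n) ℂ n) q).2
  · intro hx
    obtain ⟨q, hq⟩ := (esymmAlgHom_fin_bijective ℂ n).2 ⟨x, (mem_symmetricSubalgebra x).2 hx⟩
    exact ⟨q, by rw [aevalE_eq, AlgHom.comp_apply, hq]; rfl⟩

lemma aeval_gP_eq :
    (aeval (fun p : Fin n => gPoly n (p : ℕ)) :
        MvPolynomial (Fin n) ℂ →ₐ[ℂ] MvPolynomial (Fin n) ℂ)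
      = (Tm n).comp ((aeval (Epoly n)).comp (Phi n)) := by
  apply algHom_ext
  intro p
  rw [aeval_X, AlgHom.comp_apply, AlgHom.comp_apply, Phi, aeval_X, map_add, map_sum]
  simp_rw [map_mul, aeval_C, algebraMap_eq, aeval_X]
  rw [← hP_eq, Tm_hP]

lemma injective_aeval_gP :
    Function.Injective (aeval (fun p : Fin n => gPoly n (p : ℕ)) :
      MvPolynomial (Fin n) ℂ →ₐ[ℂ] MvPolynomial (Fin n) ℂ) := by
  rw [aeval_gP_eq]
  have hT : Function.Injective (Tm n) := Function.LeftInverse.injective (Sm_Tm n)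
  have hPhi : Function.Injective (Phi n) := Function.LeftInverse.injective (Psi_Phi n)
  have hE : Function.Injective (aeval (Epoly n) :
      MvPolynomial (Fin n) ℂ →ₐ[ℂ] MvPolynomial (Fin n) ℂ) := by
    rw [aevalE_eq]
    exact Subtype.val_injective.comp (esymmAlgHom_fin_bijective ℂ n).1
  simp only [AlgHom.coe_comp]
  exact hT.comp (hE.comp hPhi)

end ShiftP

/-- For `p = 0, 1, …, n−1` the polynomials
`g_p = (x_1 − p + n − 1)(x_2 − p + n − 2)⋯(x_n − p)` are shifted symmetric, algebraically
independent over `ℂ`, and generate the algebra `Λ*(n)` of shifted symmetric polynomials: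
`Λ*(n) = ℂ[g_0, g_1, …, g_{n−1}]`. -/
theorem shiftedSymmetric_eq_polynomial_algebra_g (n : ℕ) :
    (∀ p : Fin n, ShiftedSymmetric (gPoly n (p : ℕ))) ∧
    AlgebraicIndependent ℂ (fun p : Fin n => gPoly n (p : ℕ)) ∧
    (∀ f : MvPolynomial (Fin n) ℂ,
      ShiftedSymmetric f ↔
        f ∈ Algebra.adjoin ℂ (Set.range fun p : Fin n => gPoly n (p : ℕ))) := by
  refine ⟨fun p => ?_, ?_, fun f => ?_⟩
  · rw [ShiftP.shiftedSymmetric_iff, ShiftP.Sm_gP]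
    exact ShiftP.hP_isSymmetric n (p : ℕ)
  · rw [algebraicIndependent_iff_injective_aeval]
    exact ShiftP.injective_aeval_gP n
  · rw [ShiftP.shiftedSymmetric_iff, Algebra.adjoin_range_eq_range_aeval, AlgHom.mem_range,
      ← ShiftP.range_aevalE]
    constructor
    · rintro ⟨q, hq⟩
      refine ⟨ShiftP.Psi n q, ?_⟩
      rw [ShiftP.aeval_gP_eq, AlgHom.comp_apply, AlgHom.comp_apply, ShiftP.Phi_Psi, hq,
        ShiftP.Tm_Sm]
    · rintro ⟨q, rfl⟩
      refine ⟨ShiftP.Phi n q, ?_⟩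
      rw [ShiftP.aeval_gP_eq, AlgHom.comp_apply, AlgHom.comp_apply, ShiftP.Sm_Tm]
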